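/- Let n ≥ 2, let H ≤ Sym(n), and let u and v be homeomorphisms of C_n induced by the tables (P; σ_1,…,σ_k; S; τ_1,…,τ_k) and (S; σ'_1,…,σ'_k; Q'; τ'_1,…,τ'_k) over H respectively, where both tables use the same complete prefix code S = {s_1,…,s_k} with matching indexing. Then the composite v ∘ u is induced by the table (P; σ_1τ_1^{−1},…,σ_kτ_k^{−1}; Q'; τ'_1(σ'_1)^{−1},…,τ'_k(σ'_k)^{−1}). -/

import Mathlib

namespace Paper

/-- Concatenation of a finite word with an infinite word. -/
def cat {n : ℕ} (w : List (Fin n)) (ζ : ℕ → Fin n) : ℕ → Fin n :=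
  fun i => if h : i < w.length then w[i]'h else ζ (i - w.length)

/-- The finite word `w` is a prefix of the infinite word `ζ`. -/
def IsPref {n : ℕ} (w : List (Fin n)) (ζ : ℕ → Fin n) : Prop :=
  ∀ (i : ℕ) (h : i < w.length), w[i]'h = ζ i

/-- An indexed family of finite words is a complete prefix code: every infinite
word has exactly one member of the family as a prefix. -/
def IsCPC {n : ℕ} {ι : Type} (P : ι → List (Fin n)) : Prop :=
  ∀ ζ : ℕ → Fin n, ∃! i : ι, IsPref (P i) ζ

/-- `f` is the map described by the table with domain code `P`, range code `Q` and
permutations `σ, τ`: it sends `pᵢ‖σᵢ(u)` to `qᵢ‖τᵢ(u)`. -/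
def TableFun {n : ℕ} {ι : Type} (P Q : ι → List (Fin n))
    (σ τ : ι → Equiv.Perm (Fin n)) (f : (ℕ → Fin n) → (ℕ → Fin n)) : Prop :=
  ∀ (i : ι) (u : ℕ → Fin n),
    f (cat (P i) (fun j => σ i (u j))) = cat (Q i) (fun j => τ i (u j))

/-- A table over a subgroup `H ≤ Sym(n)`. -/
structure Table (n : ℕ) (H : Subgroup (Equiv.Perm (Fin n))) where
  k : ℕ
  P : Fin k → List (Fin n)
  Q : Fin k → List (Fin n)
  σ : Fin k → Equiv.Perm (Fin n)
  τ : Fin k → Equiv.Perm (Fin n)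
  σ_mem : ∀ i, σ i ∈ H
  τ_mem : ∀ i, τ i ∈ H
  hP : IsCPC P
  hQ : IsCPC Q

/-- The table `T` induces the map `f`. -/
def Induces {n : ℕ} {H : Subgroup (Equiv.Perm (Fin n))} (T : Table n H)
    (f : (ℕ → Fin n) → (ℕ → Fin n)) : Prop :=
  TableFun T.P T.Q T.σ T.τ f

/-- The symmetric Thompson group `V_n(H)`, as the set of homeomorphisms of the
Cantor space `C_n = A_n^ℕ` induced by tables over `H`. -/
def Vset (n : ℕ) (H : Subgroup (Equiv.Perm (Fin n))) :
    Set ((ℕ → Fin n) ≃ₜ (ℕ → Fin n)) :=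
  { f | ∃ T : Table n H, Induces T ⇑f }

/-- If `u` is induced by the table `(P; σ; S; τ)` and `v` by the
table `(S; σ'; Q'; τ')` over `H`, with the same middle complete prefix code `S` and
matching indexing, then `v ∘ u` is induced by the table
`(P; σᵢτᵢ⁻¹; Q'; τ'ᵢ(σ'ᵢ)⁻¹)`. -/
theorem stmt17 (n : ℕ) (hn : 2 ≤ n) (H : Subgroup (Equiv.Perm (Fin n))) (k : ℕ)
    (P S Q' : Fin k → List (Fin n)) (hP : IsCPC P) (hS : IsCPC S) (hQ' : IsCPC Q')
    (σ τ σ' τ' : Fin k → Equiv.Perm (Fin n))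
    (hσ : ∀ i, σ i ∈ H) (hτ : ∀ i, τ i ∈ H)
    (hσ' : ∀ i, σ' i ∈ H) (hτ' : ∀ i, τ' i ∈ H)
    (u v : (ℕ → Fin n) ≃ₜ (ℕ → Fin n))
    (hu : TableFun P S σ τ ⇑u) (hv : TableFun S Q' σ' τ' ⇑v) :
    TableFun P Q' (fun i => σ i * (τ i)⁻¹) (fun i => τ' i * (σ' i)⁻¹)
      (⇑v ∘ ⇑u) := by
  intro i w
  have h1 := hu i (fun j => (τ i)⁻¹ (w j))
  have h2 := hv i (fun j => (σ' i)⁻¹ (w j))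
  simp only [fun (f : Equiv.Perm (Fin n)) (x : Fin n) => (show f (f⁻¹ x) = x from f.apply_symm_apply x)] at h1 h2
  simpa only [Function.comp_apply, Equiv.Perm.mul_apply, h1] using h2

end Paper
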